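/- Let p ∈ (2,∞] and let a, b ∈ ℝ satisfy a + b > 1 − 1/p, 2a + b > 2 − 2/p, and a > 1/2 − 1/p (with the convention 1/∞ = 0). Then there exists a constant C such that for all f, g ∈ L^p(ℝ), ∬_{ℝ×ℝ} (1+|x|)^{−a}·(1+|y|)^{−a}·(1+|x−y|)^{−b}·|f(x)|·|g(y)| dx dy ≤ C·‖f‖_{L^p(ℝ)}·‖g‖_{L^p(ℝ)}. -/

import Mathlib

open MeasureTheory
open scoped ENNReal

noncomputable section

namespace SW18

def w (c : ℝ) (x : ℝ) : ℝ := (1 + |x|) ^ (-c)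

lemma w_pos (c x : ℝ) : 0 < w c x := Real.rpow_pos_of_pos (by positivity) _

lemma w_meas (c : ℝ) : Measurable (w c) := by unfold w; fun_prop

def W (c : ℝ) (x : ℝ) : ℝ≥0∞ := ENNReal.ofReal (w c x)

lemma W_eq_nnnorm (c x : ℝ) : W c x = (‖w c x‖₊ : ℝ≥0∞) :=
  (Real.enorm_eq_ofReal (w_pos c x).le).symm

lemma W_meas (c : ℝ) : Measurable (W c) := (w_meas c).ennreal_ofReal

lemma W_ne_top (c x : ℝ) : W c x ≠ ∞ := ENNReal.ofReal_ne_top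

lemma W_rpow (c t : ℝ) (x : ℝ) : W c x ^ t = W (c * t) x := by
  unfold W w
  rw [ENNReal.ofReal_rpow_of_pos (by positivity), ← Real.rpow_mul (by positivity),
    neg_mul]

lemma W_add (c d x : ℝ) : W c x * W d x = W (c + d) x := by
  unfold W w
  rw [← ENNReal.ofReal_mul (by positivity), ← Real.rpow_add (by positivity), neg_add]

lemma lintegral_W_lt_top {c : ℝ} (h : 1 < c) : ∫⁻ x : ℝ, W c x < ∞ := by
  have := finite_integral_one_add_norm (E := ℝ) (μ := volume) (r := c) (by simpa using h)
  simpa [W, w, Real.norm_eq_abs] using this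

lemma lintegral_W_rpow {c t : ℝ} (h : 1 < c * t) :
    ∫⁻ x : ℝ, W c x ^ t < ∞ := by
  simp_rw [W_rpow c t]; exact lintegral_W_lt_top h

lemma eLpNorm_w_lt_top {c : ℝ} {σ : ℝ≥0∞} (hσ0 : σ ≠ 0) (hσt : σ ≠ ∞)
    (h : 1 < c * σ.toReal) : eLpNorm (w c) σ volume < ∞ := by
  rw [eLpNorm_eq_lintegral_rpow_enorm_toReal hσ0 hσt]
  refine ENNReal.rpow_lt_top_of_nonneg (by positivity) ?_
  have : ∫⁻ x : ℝ, (‖w c x‖₊ : ℝ≥0∞) ^ σ.toReal = ∫⁻ x : ℝ, W c x ^ σ.toReal :=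
    lintegral_congr fun x => by rw [W_eq_nnnorm]
  change ∫⁻ x : ℝ, (‖w c x‖₊ : ℝ≥0∞) ^ σ.toReal ≠ ∞
  rw [this]
  exact (lintegral_W_rpow h).ne

lemma holder_step {p ρ σ : ℝ≥0∞} {f : ℝ → ℂ} (hf : AEStronglyMeasurable f volume) (c : ℝ)
    (hpqr : 1/ρ = 1/σ + 1/p) :
    eLpNorm (fun x => w c x • f x) ρ volume ≤ eLpNorm (w c) σ volume * eLpNorm f p volume := by
  have : ENNReal.HolderTriple σ p ρ := ⟨by simpa only [one_div] using hpqr.symm⟩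
  simpa only [ENNReal.coe_one, one_mul] using
    eLpNorm_le_eLpNorm_mul_eLpNorm_of_nnnorm ((w_meas c).aestronglyMeasurable) hf
    (fun r z => r • z) 1
    (Filter.Eventually.of_forall fun x => le_of_eq (by rw [one_mul, nnnorm_smul]))

lemma nnnorm_w_smul (c : ℝ) (f : ℝ → ℂ) (x : ℝ) :
    (‖w c x • f x‖₊ : ℝ≥0∞) = W c x * (‖f x‖₊ : ℝ≥0∞) := by
  rw [nnnorm_smul, ENNReal.coe_mul, W_eq_nnnorm]

lemma eLpNorm_w_smul_eq (c : ℝ) (f : ℝ → ℂ) {ρ : ℝ≥0∞} (h0 : ρ ≠ 0) (ht : ρ ≠ ∞) :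
    eLpNorm (fun x => w c x • f x) ρ volume
      = (∫⁻ x : ℝ, (W c x * (‖f x‖₊ : ℝ≥0∞)) ^ ρ.toReal) ^ (1/ρ.toReal) := by
  rw [eLpNorm_eq_lintegral_rpow_enorm_toReal h0 ht]
  congr 1
  exact lintegral_congr fun x => by rw [← nnnorm_w_smul]; rfl

lemma eLpNorm_w_smul_one_eq (c : ℝ) (f : ℝ → ℂ) :
    eLpNorm (fun x => w c x • f x) 1 volume = ∫⁻ x : ℝ, W c x * (‖f x‖₊ : ℝ≥0∞) := by
  rw [eLpNorm_one_eq_lintegral_enorm]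
  exact lintegral_congr fun x => by rw [← nnnorm_w_smul]; rfl

lemma pointwise_id {u : ℝ} (hu0 : 0 < u) (hu1 : u < 1) (kk FF GG : ℝ≥0∞) :
    FF * GG * kk = (kk ^ (1/u) * FF ^ (1 - u/2)⁻¹) ^ (u/2)
      * (kk ^ (1/u) * GG ^ (1 - u/2)⁻¹) ^ (u/2)
      * (FF ^ (1 - u/2)⁻¹ * GG ^ (1 - u/2)⁻¹) ^ (1-u) := by
  have h2 : (0:ℝ) < 1 - u/2 := by linarith
  rw [ENNReal.mul_rpow_of_nonneg _ _ (by linarith : (0:ℝ) ≤ u/2),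
      ENNReal.mul_rpow_of_nonneg _ _ (by linarith : (0:ℝ) ≤ u/2),
      ENNReal.mul_rpow_of_nonneg _ _ (by linarith : (0:ℝ) ≤ 1-u),
      ← ENNReal.rpow_mul, ← ENNReal.rpow_mul, ← ENNReal.rpow_mul, ← ENNReal.rpow_mul,
      ← ENNReal.rpow_mul]
  have hk : kk ^ (1/u * (u/2)) * kk ^ (1/u * (u/2)) = kk := by
    rw [← ENNReal.rpow_add_of_nonneg _ _ (by positivity) (by positivity),
      show 1/u * (u/2) + 1/u * (u/2) = 1 by field_simp; norm_num, ENNReal.rpow_one]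
  have hθ1 : 0 ≤ (1 - u/2)⁻¹ * (u/2) := mul_nonneg (inv_nonneg.2 h2.le) (by linarith)
  have hθ2 : 0 ≤ (1 - u/2)⁻¹ * (1-u) := mul_nonneg (inv_nonneg.2 h2.le) (by linarith)
  have hsum2 : (1 - u/2)⁻¹ * (u/2) + (1 - u/2)⁻¹ * (1-u) = 1 := by
    rw [show (1 - u/2)⁻¹ * (u/2) + (1 - u/2)⁻¹ * (1-u) = (1-u/2)⁻¹ * (1 - u/2) by ring,
      inv_mul_cancel₀ h2.ne']
  have hF : FF ^ ((1 - u/2)⁻¹ * (u/2)) * FF ^ ((1 - u/2)⁻¹ * (1-u)) = FF := by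
    rw [← ENNReal.rpow_add_of_nonneg _ _ hθ1 hθ2, hsum2, ENNReal.rpow_one]
  have hG : GG ^ ((1 - u/2)⁻¹ * (u/2)) * GG ^ ((1 - u/2)⁻¹ * (1-u)) = GG := by
    rw [← ENNReal.rpow_add_of_nonneg _ _ hθ1 hθ2, hsum2, ENNReal.rpow_one]
  calc FF * GG * kk
      = (kk ^ (1/u * (u/2)) * kk ^ (1/u * (u/2)))
        * ((FF ^ ((1 - u/2)⁻¹ * (u/2)) * FF ^ ((1 - u/2)⁻¹ * (1-u)))
          * (GG ^ ((1 - u/2)⁻¹ * (u/2)) * GG ^ ((1 - u/2)⁻¹ * (1-u)))) := by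
        rw [hk, hF, hG]; ring
    _ = kk ^ (1/u * (u/2)) * FF ^ ((1 - u/2)⁻¹ * (u/2))
        * (kk ^ (1/u * (u/2)) * GG ^ ((1 - u/2)⁻¹ * (u/2)))
        * (FF ^ ((1 - u/2)⁻¹ * (1-u)) * GG ^ ((1 - u/2)⁻¹ * (1-u))) := by ring

end SW18

open SW18

/-- Theorem (Stein–Weiss type inequality, case 2 < p ≤ ∞, with the convention
1/∞ = 0): the bilinear form with kernel (1+|x|)^{−a}(1+|y|)^{−a}(1+|x−y|)^{−b} is
bounded on L^p(ℝ) × L^p(ℝ). -/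
theorem statement18
    (p : ℝ≥0∞) (hp : 2 < p)
    (a b : ℝ)
    (hab : 1 - (1 / p).toReal < a + b)
    (h2ab : 2 - 2 * (1 / p).toReal < 2 * a + b)
    (ha : 1 / 2 - (1 / p).toReal < a) :
    ∃ C : ℝ, 0 ≤ C ∧ ∀ f g : ℝ → ℂ,
      MemLp f p volume → MemLp g p volume →
      (∫⁻ x : ℝ, ∫⁻ y : ℝ,
          ENNReal.ofReal
            ((1 + |x|) ^ (-a) * (1 + |y|) ^ (-a) * (1 + |x - y|) ^ (-b)) *
            (‖f x‖₊ : ℝ≥0∞) * (‖g y‖₊ : ℝ≥0∞)) ≤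
        ENNReal.ofReal C * eLpNorm f p volume * eLpNorm g p volume := by
  have hp0 : p ≠ 0 := (lt_trans (by norm_num) hp).ne'
  have hip_lt : 1/p < 1/2 := by
    rw [one_div, one_div]
    exact ENNReal.inv_lt_inv.mpr hp
  have hp_top : 1/p ≠ ∞ := by simp [hp0]
  set τ : ℝ := (1/p).toReal with hτ_def
  have hτ : τ < 1/2 := by
    have h := (ENNReal.toReal_lt_toReal hp_top (by norm_num : (1/2 : ℝ≥0∞) ≠ ∞)).mpr hip_lt
    rwa [show ((1:ℝ≥0∞)/2).toReal = 1/2 by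
      rw [ENNReal.toReal_div, ENNReal.toReal_one, ENNReal.toReal_ofNat]] at h
  have hτ0 : 0 ≤ τ := ENNReal.toReal_nonneg
  have hofτ : ENNReal.ofReal τ = 1/p := ENNReal.ofReal_toReal hp_top
  rcases le_or_gt b 0 with hb | hb
  · -- case b ≤ 0
    have h1p_le : 1/p ≤ 1 := le_of_lt (lt_of_lt_of_le hip_lt (by norm_num))
    have hsub0 : (1:ℝ≥0∞) - 1/p ≠ 0 := by
      have h1 : 1/p < 1 := lt_of_lt_of_le hip_lt (by norm_num)
      rw [Ne, tsub_eq_zero_iff_le]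
      exact h1.not_ge
    have hsub_top : (1:ℝ≥0∞) - 1/p ≠ ∞ :=
      ne_top_of_le_ne_top ENNReal.one_ne_top tsub_le_self
    have hq'0 : ((1:ℝ≥0∞) - 1/p)⁻¹ ≠ 0 := ENNReal.inv_ne_zero.mpr hsub_top
    have hq't : ((1:ℝ≥0∞) - 1/p)⁻¹ ≠ ∞ := ENNReal.inv_ne_top.mpr hsub0
    have hq'toReal : ((1:ℝ≥0∞) - 1/p)⁻¹.toReal = (1 - τ)⁻¹ := by
      rw [ENNReal.toReal_inv, ENNReal.toReal_sub_of_le h1p_le (by norm_num), ENNReal.toReal_one]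
    have h1τ : (0:ℝ) < 1 - τ := by linarith
    have hS : eLpNorm (w (a+b)) ((1:ℝ≥0∞) - 1/p)⁻¹ volume < ∞ := by
      refine eLpNorm_w_lt_top hq'0 hq't ?_
      rw [hq'toReal]
      have : 1 < (a+b) / (1-τ) := (one_lt_div h1τ).mpr (by linarith)
      simpa [div_eq_mul_inv] using this
    have hpqr : 1/(1:ℝ≥0∞) = 1/((1:ℝ≥0∞) - 1/p)⁻¹ + 1/p := by
      rw [one_div ((1:ℝ≥0∞) - 1/p)⁻¹, inv_inv]
      rw [tsub_add_cancel_of_le h1p_le, one_div_one]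
    set S : ℝ≥0∞ := eLpNorm (w (a+b)) ((1:ℝ≥0∞) - 1/p)⁻¹ volume with hS_def
    refine ⟨(S * S).toReal, ENNReal.toReal_nonneg, ?_⟩
    intro f g hf hg
    rw [ENNReal.ofReal_toReal (ENNReal.mul_ne_top hS.ne hS.ne)]
    have hfm := hf.aestronglyMeasurable
    have hgm := hg.aestronglyMeasurable
    have hpt : ∀ x y : ℝ,
        ENNReal.ofReal ((1 + |x|) ^ (-a) * (1 + |y|) ^ (-a) * (1 + |x - y|) ^ (-b)) *
            (‖f x‖₊ : ℝ≥0∞) * (‖g y‖₊ : ℝ≥0∞)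
          ≤ (W (a+b) x * ‖f x‖₊) * (W (a+b) y * ‖g y‖₊) := by
      intro x y
      have h1 : ENNReal.ofReal ((1 + |x|) ^ (-a) * (1 + |y|) ^ (-a) * (1 + |x - y|) ^ (-b))
          = W a x * W a y * W b (x-y) := by
        rw [ENNReal.ofReal_mul (by positivity), ENNReal.ofReal_mul (by positivity)]
        rfl
      rw [h1]
      have h3 : |x - y| ≤ |x| + |y| := by
        rw [sub_eq_add_neg]
        exact (abs_add_le x (-y)).trans_eq (by rw [abs_neg])
      have h2 : W b (x-y) ≤ W b x * W b y := by
        rw [W, W, W, ← ENNReal.ofReal_mul (w_pos b x).le]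
        apply ENNReal.ofReal_le_ofReal
        unfold w
        rw [← Real.mul_rpow (by positivity) (by positivity)]
        refine Real.rpow_le_rpow (by positivity) ?_ (by linarith)
        nlinarith [abs_nonneg x, abs_nonneg y, mul_nonneg (abs_nonneg x) (abs_nonneg y)]
      calc W a x * W a y * W b (x-y) * ‖f x‖₊ * ‖g y‖₊
          ≤ W a x * W a y * (W b x * W b y) * ‖f x‖₊ * ‖g y‖₊ := by gcongr
        _ = (W a x * W b x * ‖f x‖₊) * (W a y * W b y * ‖g y‖₊) := by ring
        _ = (W (a+b) x * ‖f x‖₊) * (W (a+b) y * ‖g y‖₊) := by rw [W_add, W_add]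
    calc (∫⁻ x : ℝ, ∫⁻ y : ℝ,
          ENNReal.ofReal
            ((1 + |x|) ^ (-a) * (1 + |y|) ^ (-a) * (1 + |x - y|) ^ (-b)) *
            (‖f x‖₊ : ℝ≥0∞) * (‖g y‖₊ : ℝ≥0∞))
        ≤ ∫⁻ x : ℝ, ∫⁻ y : ℝ, (W (a+b) x * ‖f x‖₊) * (W (a+b) y * ‖g y‖₊) :=
          lintegral_mono fun x => lintegral_mono fun y => hpt x y
      _ = (∫⁻ x : ℝ, W (a+b) x * ‖f x‖₊) * (∫⁻ y : ℝ, W (a+b) y * ‖g y‖₊) :=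
          lintegral_lintegral_mul
            ((W_meas (a+b)).aemeasurable.mul hfm.enorm)
            ((W_meas (a+b)).aemeasurable.mul hgm.enorm)
      _ = eLpNorm (fun x => w (a+b) x • f x) 1 volume
            * eLpNorm (fun y => w (a+b) y • g y) 1 volume := by
          rw [eLpNorm_w_smul_one_eq, eLpNorm_w_smul_one_eq]
      _ ≤ (S * eLpNorm f p volume) * (S * eLpNorm g p volume) :=
          mul_le_mul' (holder_step hfm _ hpqr) (holder_step hgm _ hpqr)
      _ = S * S * eLpNorm f p volume * eLpNorm g p volume := by ring
  · -- case 0 < b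
    have hml : max 0 (2 - 2*τ - 2*a) < min 1 b :=
      max_lt (lt_min one_pos hb) (lt_min (by linarith) (by linarith))
    set u : ℝ := (max 0 (2 - 2*τ - 2*a) + min 1 b)/2 with hu_def
    have hmax0 : (0:ℝ) ≤ max 0 (2 - 2*τ - 2*a) := le_max_left _ _
    have hmaxL : 2 - 2*τ - 2*a ≤ max 0 (2 - 2*τ - 2*a) := le_max_right _ _
    have hmin1 : min 1 b ≤ 1 := min_le_left _ _
    have hminb : min 1 b ≤ b := min_le_right _ _
    have hu0 : 0 < u := by rw [hu_def]; linarith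
    have huL : 2 - 2*τ - 2*a < u := by rw [hu_def]; linarith
    have hu1 : u < 1 := by rw [hu_def]; linarith
    have hub : u < b := by rw [hu_def]; linarith
    have hr2 : (0:ℝ) < 1 - u/2 := by linarith
    have hs2 : (0:ℝ) < 1 - u/2 - τ := by linarith
    have hrpos : (0:ℝ) < (1 - u/2)⁻¹ := inv_pos.mpr hr2
    have hspos : (0:ℝ) < (1 - u/2 - τ)⁻¹ := inv_pos.mpr hs2
    set ρ : ℝ≥0∞ := ENNReal.ofReal (1 - u/2)⁻¹ with hρ_def
    set σ : ℝ≥0∞ := ENNReal.ofReal (1 - u/2 - τ)⁻¹ with hσ_def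
    have hρ0 : ρ ≠ 0 := (ENNReal.ofReal_pos.mpr hrpos).ne'
    have hρt : ρ ≠ ∞ := ENNReal.ofReal_ne_top
    have hρreal : ρ.toReal = (1 - u/2)⁻¹ := ENNReal.toReal_ofReal hrpos.le
    have hσ0 : σ ≠ 0 := (ENNReal.ofReal_pos.mpr hspos).ne'
    have hσreal : σ.toReal = (1 - u/2 - τ)⁻¹ := ENNReal.toReal_ofReal hspos.le
    have hpqr : 1/ρ = 1/σ + 1/p := by
      rw [one_div, one_div, hρ_def, hσ_def, ← ENNReal.ofReal_inv_of_pos hrpos,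
        ← ENNReal.ofReal_inv_of_pos hspos, inv_inv, inv_inv, ← hofτ,
        ← ENNReal.ofReal_add (by linarith) hτ0]
      congr 1
      ring
    have hS : eLpNorm (w a) σ volume < ∞ := by
      refine eLpNorm_w_lt_top hσ0 ENNReal.ofReal_ne_top ?_
      rw [hσreal]
      have : 1 < a / (1 - u/2 - τ) := (one_lt_div hs2).mpr (by linarith)
      simpa [div_eq_mul_inv] using this
    have hIk : ∫⁻ z : ℝ, W b z ^ (1/u) < ∞ := by
      refine lintegral_W_rpow ?_
      have : 1 < b / u := (one_lt_div hu0).mpr hub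
      simpa [div_eq_mul_inv, one_div] using this
    set Ik : ℝ≥0∞ := ∫⁻ z : ℝ, W b z ^ (1/u) with hIk_def
    set S : ℝ≥0∞ := eLpNorm (w a) σ volume with hS_def
    have hE : Ik ^ u * (S * S) ≠ ∞ :=
      ENNReal.mul_ne_top (ENNReal.rpow_ne_top_of_nonneg hu0.le hIk.ne)
        (ENNReal.mul_ne_top hS.ne hS.ne)
    refine ⟨(Ik ^ u * (S * S)).toReal, ENNReal.toReal_nonneg, ?_⟩
    intro f g hf hg
    rw [ENNReal.ofReal_toReal hE]
    have hfm := hf.aestronglyMeasurable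
    have hgm := hg.aestronglyMeasurable
    set F : ℝ → ℝ≥0∞ := fun x => W a x * ‖f x‖₊ with hF_def
    set G : ℝ → ℝ≥0∞ := fun y => W a y * ‖g y‖₊ with hG_def
    have hFm : AEMeasurable F volume := (W_meas a).aemeasurable.mul hfm.enorm
    have hGm : AEMeasurable G volume := (W_meas a).aemeasurable.mul hgm.enorm
    have hFtop : ∀ x, F x ≠ ∞ := fun x =>
      ENNReal.mul_ne_top (W_ne_top a x) ENNReal.coe_ne_top
    have hGtop : ∀ y, G y ≠ ∞ := fun y =>
      ENNReal.mul_ne_top (W_ne_top a y) ENNReal.coe_ne_top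
    have hkm : Measurable (fun z : ℝ × ℝ => W b (z.1 - z.2)) :=
      (W_meas b).comp (measurable_fst.sub measurable_snd)
    have hFm2 : AEMeasurable (fun z : ℝ × ℝ => F z.1) ((volume : Measure ℝ).prod volume) :=
      hFm.comp_quasiMeasurePreserving Measure.quasiMeasurePreserving_fst
    have hGm2 : AEMeasurable (fun z : ℝ × ℝ => G z.2) ((volume : Measure ℝ).prod volume) :=
      hGm.comp_quasiMeasurePreserving Measure.quasiMeasurePreserving_snd
    -- the three Hölder factors
    have hH0m : AEMeasurable (fun z : ℝ × ℝ => W b (z.1 - z.2) ^ (1/u) * F z.1 ^ (1 - u/2)⁻¹) ((volume : Measure ℝ).prod volume) :=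
      ((hkm.pow_const _).aemeasurable).mul (hFm2.pow_const _)
    have hH1m : AEMeasurable (fun z : ℝ × ℝ => W b (z.1 - z.2) ^ (1/u) * G z.2 ^ (1 - u/2)⁻¹) ((volume : Measure ℝ).prod volume) :=
      ((hkm.pow_const _).aemeasurable).mul (hGm2.pow_const _)
    have hH2m : AEMeasurable (fun z : ℝ × ℝ => F z.1 ^ (1 - u/2)⁻¹ * G z.2 ^ (1 - u/2)⁻¹) ((volume : Measure ℝ).prod volume) :=
      (hFm2.pow_const _).mul (hGm2.pow_const _)
    have hΦm : AEMeasurable (fun z : ℝ × ℝ => F z.1 * G z.2 * W b (z.1 - z.2)) ((volume : Measure ℝ).prod volume) :=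
      (hFm2.mul hGm2).mul hkm.aemeasurable
    -- integral computations
    have hkr_meas : Measurable (fun z : ℝ => W b z ^ (1/u)) := (W_meas b).pow_const _
    have hH0 : ∫⁻ z : ℝ × ℝ, W b (z.1 - z.2) ^ (1/u) * F z.1 ^ (1 - u/2)⁻¹ ∂((volume : Measure ℝ).prod volume)
        = Ik * ∫⁻ x : ℝ, F x ^ (1 - u/2)⁻¹ := by
      rw [lintegral_prod _ hH0m]
      have inner : ∀ x : ℝ, (∫⁻ y : ℝ, W b (x - y) ^ (1/u) * F x ^ (1 - u/2)⁻¹)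
          = Ik * F x ^ (1 - u/2)⁻¹ := by
        intro x
        rw [lintegral_mul_const' _ _ (ENNReal.rpow_ne_top_of_nonneg hrpos.le (hFtop x))]
        congr 1
        exact (Measure.measurePreserving_sub_left (volume : Measure ℝ) x).lintegral_comp hkr_meas
      rw [lintegral_congr inner]
      exact lintegral_const_mul' Ik _ hIk.ne
    have hH1 : ∫⁻ z : ℝ × ℝ, W b (z.1 - z.2) ^ (1/u) * G z.2 ^ (1 - u/2)⁻¹ ∂((volume : Measure ℝ).prod volume)
        = Ik * ∫⁻ y : ℝ, G y ^ (1 - u/2)⁻¹ := by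
      rw [lintegral_prod_symm _ hH1m]
      have inner : ∀ y : ℝ, (∫⁻ x : ℝ, W b (x - y) ^ (1/u) * G y ^ (1 - u/2)⁻¹)
          = Ik * G y ^ (1 - u/2)⁻¹ := by
        intro y
        rw [lintegral_mul_const' _ _ (ENNReal.rpow_ne_top_of_nonneg hrpos.le (hGtop y))]
        congr 1
        exact (measurePreserving_sub_right (volume : Measure ℝ) y).lintegral_comp hkr_meas
      rw [lintegral_congr inner]
      exact lintegral_const_mul' Ik _ hIk.ne
    have hH2 : ∫⁻ z : ℝ × ℝ, F z.1 ^ (1 - u/2)⁻¹ * G z.2 ^ (1 - u/2)⁻¹ ∂((volume : Measure ℝ).prod volume)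
        = (∫⁻ x : ℝ, F x ^ (1 - u/2)⁻¹) * ∫⁻ y : ℝ, G y ^ (1 - u/2)⁻¹ := by
      rw [lintegral_prod _ hH2m]
      exact lintegral_lintegral_mul (hFm.pow_const _) (hGm.pow_const _)
    -- Hölder with three factors
    have hsum : ∑ i : Fin 3, (![u/2, u/2, 1-u] : Fin 3 → ℝ) i = 1 := by
      simp [Fin.sum_univ_three]
      try ring
    have hnonneg : ∀ i ∈ Finset.univ, 0 ≤ (![u/2, u/2, 1-u] : Fin 3 → ℝ) i := by
      intro i _
      fin_cases i <;> simp <;> linarith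
    have hHolder := ENNReal.lintegral_prod_norm_pow_le (μ := ((volume : Measure ℝ).prod volume)) Finset.univ
      (f := ![fun z : ℝ × ℝ => W b (z.1 - z.2) ^ (1/u) * F z.1 ^ (1 - u/2)⁻¹,
              fun z : ℝ × ℝ => W b (z.1 - z.2) ^ (1/u) * G z.2 ^ (1 - u/2)⁻¹,
              fun z : ℝ × ℝ => F z.1 ^ (1 - u/2)⁻¹ * G z.2 ^ (1 - u/2)⁻¹])
      (by
        intro i _
        fin_cases i
        · exact hH0m
        · exact hH1m
        · exact hH2m)
      (p := ![u/2, u/2, 1-u]) hsum hnonneg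
    have hLHS : (∫⁻ x : ℝ, ∫⁻ y : ℝ,
          ENNReal.ofReal
            ((1 + |x|) ^ (-a) * (1 + |y|) ^ (-a) * (1 + |x - y|) ^ (-b)) *
            (‖f x‖₊ : ℝ≥0∞) * (‖g y‖₊ : ℝ≥0∞))
        = ∫⁻ z : ℝ × ℝ, F z.1 * G z.2 * W b (z.1 - z.2)
            ∂((volume : Measure ℝ).prod volume) := by
      rw [lintegral_prod _ hΦm]
      refine lintegral_congr fun x => lintegral_congr fun y => ?_
      rw [ENNReal.ofReal_mul (by positivity), ENNReal.ofReal_mul (by positivity)]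
      simp only [hF_def, hG_def, W, w]
      ring
    calc (∫⁻ x : ℝ, ∫⁻ y : ℝ,
          ENNReal.ofReal
            ((1 + |x|) ^ (-a) * (1 + |y|) ^ (-a) * (1 + |x - y|) ^ (-b)) *
            (‖f x‖₊ : ℝ≥0∞) * (‖g y‖₊ : ℝ≥0∞))
        = ∫⁻ z : ℝ × ℝ, F z.1 * G z.2 * W b (z.1 - z.2)
            ∂((volume : Measure ℝ).prod volume) := hLHS
      _ = ∫⁻ z : ℝ × ℝ, ∏ i ∈ Finset.univ,
            (![fun z : ℝ × ℝ => W b (z.1 - z.2) ^ (1/u) * F z.1 ^ (1 - u/2)⁻¹,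
               fun z : ℝ × ℝ => W b (z.1 - z.2) ^ (1/u) * G z.2 ^ (1 - u/2)⁻¹,
               fun z : ℝ × ℝ => F z.1 ^ (1 - u/2)⁻¹ * G z.2 ^ (1 - u/2)⁻¹]) i z
              ^ (![u/2, u/2, 1-u] : Fin 3 → ℝ) i
            ∂((volume : Measure ℝ).prod volume) := by
          refine lintegral_congr fun z => ?_
          rw [Fin.prod_univ_three]
          simp only [Matrix.cons_val_zero, Matrix.cons_val_one, Matrix.head_cons,
            Matrix.cons_val_two, Matrix.tail_cons]
          exact pointwise_id hu0 hu1 (W b (z.1 - z.2)) (F z.1) (G z.2)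
      _ ≤ ∏ i ∈ Finset.univ,
            (∫⁻ z : ℝ × ℝ,
              (![fun z : ℝ × ℝ => W b (z.1 - z.2) ^ (1/u) * F z.1 ^ (1 - u/2)⁻¹,
                 fun z : ℝ × ℝ => W b (z.1 - z.2) ^ (1/u) * G z.2 ^ (1 - u/2)⁻¹,
                 fun z : ℝ × ℝ => F z.1 ^ (1 - u/2)⁻¹ * G z.2 ^ (1 - u/2)⁻¹]) i z
              ∂((volume : Measure ℝ).prod volume)) ^ (![u/2, u/2, 1-u] : Fin 3 → ℝ) i :=
          hHolder
      _ = (Ik * ∫⁻ x : ℝ, F x ^ (1 - u/2)⁻¹) ^ (u/2)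
          * (Ik * ∫⁻ y : ℝ, G y ^ (1 - u/2)⁻¹) ^ (u/2)
          * ((∫⁻ x : ℝ, F x ^ (1 - u/2)⁻¹) * ∫⁻ y : ℝ, G y ^ (1 - u/2)⁻¹) ^ (1-u) := by
          rw [Fin.prod_univ_three]
          simp only [Matrix.cons_val_zero, Matrix.cons_val_one, Matrix.head_cons,
            Matrix.cons_val_two, Matrix.tail_cons]
          rw [hH0, hH1, hH2]
      _ = Ik ^ u * ((∫⁻ x : ℝ, F x ^ (1 - u/2)⁻¹) ^ (1 - u/2)
            * (∫⁻ y : ℝ, G y ^ (1 - u/2)⁻¹) ^ (1 - u/2)) := by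
          rw [ENNReal.mul_rpow_of_nonneg _ _ (by linarith : (0:ℝ) ≤ u/2),
            ENNReal.mul_rpow_of_nonneg _ _ (by linarith : (0:ℝ) ≤ u/2),
            ENNReal.mul_rpow_of_nonneg _ _ (by linarith : (0:ℝ) ≤ 1-u)]
          have hk : Ik ^ (u/2) * Ik ^ (u/2) = Ik ^ u := by
            rw [← ENNReal.rpow_add_of_nonneg _ _ (by linarith) (by linarith),
              show u/2 + u/2 = u by ring]
          have hJf : (∫⁻ x : ℝ, F x ^ (1 - u/2)⁻¹) ^ (u/2)
              * (∫⁻ x : ℝ, F x ^ (1 - u/2)⁻¹) ^ (1-u)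
              = (∫⁻ x : ℝ, F x ^ (1 - u/2)⁻¹) ^ (1 - u/2) := by
            rw [← ENNReal.rpow_add_of_nonneg _ _ (by linarith) (by linarith),
              show u/2 + (1-u) = 1 - u/2 by ring]
          have hJg : (∫⁻ y : ℝ, G y ^ (1 - u/2)⁻¹) ^ (u/2)
              * (∫⁻ y : ℝ, G y ^ (1 - u/2)⁻¹) ^ (1-u)
              = (∫⁻ y : ℝ, G y ^ (1 - u/2)⁻¹) ^ (1 - u/2) := by
            rw [← ENNReal.rpow_add_of_nonneg _ _ (by linarith) (by linarith),
              show u/2 + (1-u) = 1 - u/2 by ring]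
          calc Ik ^ (u/2) * (∫⁻ x : ℝ, F x ^ (1 - u/2)⁻¹) ^ (u/2)
              * (Ik ^ (u/2) * (∫⁻ y : ℝ, G y ^ (1 - u/2)⁻¹) ^ (u/2))
              * ((∫⁻ x : ℝ, F x ^ (1 - u/2)⁻¹) ^ (1-u)
                * (∫⁻ y : ℝ, G y ^ (1 - u/2)⁻¹) ^ (1-u))
              = (Ik ^ (u/2) * Ik ^ (u/2))
                * (((∫⁻ x : ℝ, F x ^ (1 - u/2)⁻¹) ^ (u/2)
                    * (∫⁻ x : ℝ, F x ^ (1 - u/2)⁻¹) ^ (1-u))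
                  * ((∫⁻ y : ℝ, G y ^ (1 - u/2)⁻¹) ^ (u/2)
                    * (∫⁻ y : ℝ, G y ^ (1 - u/2)⁻¹) ^ (1-u))) := by ring
            _ = Ik ^ u * ((∫⁻ x : ℝ, F x ^ (1 - u/2)⁻¹) ^ (1 - u/2)
                  * (∫⁻ y : ℝ, G y ^ (1 - u/2)⁻¹) ^ (1 - u/2)) := by
                rw [hk, hJf, hJg]
      _ = Ik ^ u * (eLpNorm (fun x => w a x • f x) ρ volume
            * eLpNorm (fun x => w a x • g x) ρ volume) := by
          rw [eLpNorm_w_smul_eq a f hρ0 hρt, eLpNorm_w_smul_eq a g hρ0 hρt, hρreal,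
            one_div, inv_inv]
          try simp only [hF_def, hG_def]
      _ ≤ Ik ^ u * ((S * eLpNorm f p volume) * (S * eLpNorm g p volume)) := by
          gcongr
          · exact holder_step hfm a hpqr
          · exact holder_step hgm a hpqr
      _ = Ik ^ u * (S * S) * eLpNorm f p volume * eLpNorm g p volume := by ring
end
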